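/- Jacobi's determinant identity: for an n×n matrix M (n ≥ 2) with determinant D, and row indices i₁ < i₂, column indices j₁ < j₂, one has D · D[i₁,i₂;j₁,j₂] = D[i₁;j₁]·D[i₂;j₂] − D[i₁;j₂]·D[i₂;j₁], where D[...;...] denotes the minor obtained by deleting the listed rows and columns. -/

import Mathlib

open Matrix

namespace JacobiAux

variable {R : Type*} [CommRing R]

/-- Cofactor formula: determinant of a matrix with a column replaced by a basis vector. -/
lemma det_updateColumn_single {N : ℕ} (A : Matrix (Fin (N + 1)) (Fin (N + 1)) R)
    (i j : Fin (N + 1)) :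
    (A.updateCol j (Pi.single i 1)).det
      = (-1) ^ (i.val + j.val) * (A.submatrix i.succAbove j.succAbove).det := by
  have h1 : (A.updateCol j (Pi.single i 1))ᵀ = Aᵀ.updateRow j (Pi.single i 1) := by
    ext p q
    simp [updateCol_apply, updateRow_apply, Matrix.transpose_apply]
  have h2 : (Aᵀ.updateRow j (Pi.single i 1)).det = adjugate Aᵀ i j := (adjugate_apply _ _ _).symm
  rw [← det_transpose, h1, h2, adjugate_fin_succ_eq_det_submatrix]
  rw [show Aᵀ.submatrix j.succAbove i.succAbove = (A.submatrix i.succAbove j.succAbove)ᵀ from rfl,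
    det_transpose, Nat.add_comm]

lemma updateColumn_comm' {m : Type*} [DecidableEq m] {α : Type*} (A : Matrix m m α)
    {j₁ j₂ : m} (h : j₁ ≠ j₂) (u v : m → α) :
    (A.updateCol j₁ u).updateCol j₂ v = (A.updateCol j₂ v).updateCol j₁ u := by
  ext p q
  by_cases h1 : q = j₁ <;> by_cases h2 : q = j₂ <;>
    simp_all [updateCol_apply]

lemma submatrix_updateColumn' {N : ℕ} (A : Matrix (Fin (N + 1)) (Fin (N + 1)) R)
    (c : Fin (N + 1) → R) (r : Fin N → Fin (N + 1)) (cs : Fin N → Fin (N + 1))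
    (hcs : Function.Injective cs) (j : Fin (N + 1)) (j' : Fin N) (hj : cs j' = j) :
    (A.updateCol j c).submatrix r cs
      = (A.submatrix r cs).updateCol j' (fun k => c (r k)) := by
  ext p q
  by_cases hq : q = j'
  · subst hq; simp [updateCol_apply, hj]
  · have : cs q ≠ j := fun hcq => hq (hcs (hcq.trans hj.symm))
    simp [updateCol_apply, hq, this]

lemma perm_cases {m : Type*} [DecidableEq m] {j₁ j₂ : m} (h : j₁ ≠ j₂)
    (σ : Equiv.Perm m) (hσ : ∀ q, q ≠ j₁ → q ≠ j₂ → σ q = q) :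
    σ = 1 ∨ σ = Equiv.swap j₁ j₂ := by
  have key : ∀ q, σ q = j₁ ∨ σ q = j₂ ∨ σ q = q := by
    intro q
    by_cases h1 : σ q = j₁
    · exact Or.inl h1
    by_cases h2 : σ q = j₂
    · exact Or.inr (Or.inl h2)
    · exact Or.inr (Or.inr (σ.injective (hσ (σ q) h1 h2)))
  have h1 : σ j₁ = j₁ ∨ σ j₁ = j₂ := by
    rcases key j₁ with h' | h' | h'
    · exact Or.inl h'
    · exact Or.inr h'
    · exact Or.inl h'
  have h2 : σ j₂ = j₁ ∨ σ j₂ = j₂ := by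
    rcases key j₂ with h' | h' | h'
    · exact Or.inl h'
    · exact Or.inr h'
    · exact Or.inr h'
  rcases h1 with h1 | h1
  · left
    ext q
    by_cases hq1 : q = j₁
    · simp [hq1, h1]
    by_cases hq2 : q = j₂
    · subst hq2
      rcases h2 with h2 | h2
      · exact absurd (σ.injective (h2.trans h1.symm)) (Ne.symm h)
      · simp [h2]
    · simp [hσ q hq1 hq2]
  · right
    have h2' : σ j₂ = j₁ := by
      rcases h2 with h2 | h2
      · exact h2
      · exact absurd (σ.injective (h1.trans h2.symm)) h
    ext q
    by_cases hq1 : q = j₁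
    · simp [hq1, h1, Equiv.swap_apply_left]
    by_cases hq2 : q = j₂
    · simp [hq2, h2', Equiv.swap_apply_right]
    · simp [hσ q hq1 hq2, Equiv.swap_apply_of_ne_of_ne hq1 hq2]

lemma prod_two_special {m : Type*} [DecidableEq m] [Fintype m] {j₁ j₂ : m} (h : j₁ ≠ j₂)
    (f : m → R) (hf : ∀ q, q ≠ j₁ → q ≠ j₂ → f q = 1) :
    ∏ q, f q = f j₁ * f j₂ := by
  rw [← Finset.mul_prod_erase Finset.univ f (Finset.mem_univ j₁),
    ← Finset.mul_prod_erase _ f (Finset.mem_erase.mpr ⟨Ne.symm h, Finset.mem_univ j₂⟩),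
    Finset.prod_eq_one, mul_one]
  intro q hq
  rw [Finset.mem_erase, Finset.mem_erase] at hq
  exact hf q hq.2.1 hq.1

lemma det_one_updateColumn_pair {m : Type*} [DecidableEq m] [Fintype m]
    {j₁ j₂ : m} (h : j₁ ≠ j₂) (u v : m → R) :
    (((1 : Matrix m m R).updateCol j₁ u).updateCol j₂ v).det
      = u j₁ * v j₂ - u j₂ * v j₁ := by
  set X := ((1 : Matrix m m R).updateCol j₁ u).updateCol j₂ v with hX
  have hXapp : ∀ p q, X p q = if q = j₂ then v p else if q = j₁ then u p
      else (1 : Matrix m m R) p q := by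
    intro p q; simp [hX, updateCol_apply]
  have hswap : (1 : Equiv.Perm m) ≠ Equiv.swap j₁ j₂ := by
    intro hc
    have := congrArg (fun e : Equiv.Perm m => e j₁) hc
    simp [Equiv.swap_apply_left] at this
    exact h this
  rw [det_apply]
  rw [← Finset.sum_subset (Finset.subset_univ ({1, Equiv.swap j₁ j₂} : Finset (Equiv.Perm m)))]
  · rw [Finset.sum_insert (by simpa using hswap), Finset.sum_singleton]
    have t1 : ∏ i, X ((1 : Equiv.Perm m) i) i = u j₁ * v j₂ := by
      rw [prod_two_special h]
      · simp [hXapp, h]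
      · intro q hq1 hq2
        simp [hXapp, hq1, hq2, one_apply]
    have t2 : ∏ i, X (Equiv.swap j₁ j₂ i) i = u j₂ * v j₁ := by
      rw [prod_two_special h]
      · simp [hXapp, h, Ne.symm h, Equiv.swap_apply_left, Equiv.swap_apply_right, mul_comm]
      · intro q hq1 hq2
        simp [hXapp, hq1, hq2, Equiv.swap_apply_of_ne_of_ne hq1 hq2, one_apply]
    rw [t1, t2, Equiv.Perm.sign_one, Equiv.Perm.sign_swap h]
    simp only [one_smul, Units.neg_smul]
    ring
  · intro σ _ hσ
    simp only [Finset.mem_insert, Finset.mem_singleton] at hσ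
    push_neg at hσ
    have : ∃ q, q ≠ j₁ ∧ q ≠ j₂ ∧ σ q ≠ q := by
      by_contra hc
      push_neg at hc
      rcases perm_cases h σ (fun q h1 h2 => hc q h1 h2) with h' | h'
      · exact hσ.1 h'
      · exact hσ.2 h'
    obtain ⟨q, hq1, hq2, hq3⟩ := this
    have hz : X (σ q) q = 0 := by
      simp [hXapp, hq1, hq2, one_apply, hq3]
    have : ∏ i, X (σ i) i = 0 := Finset.prod_eq_zero (Finset.mem_univ q) hz
    rw [this, smul_zero]

end JacobiAux

namespace JacobiAux

lemma jacobi_key {R : Type*} [CommRing R] {n : ℕ}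
    (M : Matrix (Fin (n + 2)) (Fin (n + 2)) R)
    (i₁ i₂ j₁ j₂ : Fin (n + 2)) (hi : i₁.val < i₂.val) (hj : j₁.val < j₂.val) :
    M.det * (M.det *
      (M.submatrix
        (fun k : Fin n => i₂.succAbove
          ((⟨i₁.val, Nat.lt_of_lt_of_le hi (Nat.le_of_lt_succ i₂.isLt)⟩ : Fin (n + 1)).succAbove k))
        (fun k : Fin n => j₂.succAbove
          ((⟨j₁.val, Nat.lt_of_lt_of_le hj (Nat.le_of_lt_succ j₂.isLt)⟩ : Fin (n + 1)).succAbove k))).det) =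
    M.det * ((M.submatrix i₁.succAbove j₁.succAbove).det *
        (M.submatrix i₂.succAbove j₂.succAbove).det -
      (M.submatrix i₁.succAbove j₂.succAbove).det *
        (M.submatrix i₂.succAbove j₁.succAbove).det) := by
  have hjne : j₁ ≠ j₂ := by intro e; rw [e] at hj; exact lt_irrefl _ hj
  set D11 := (M.submatrix i₁.succAbove j₁.succAbove).det with hD11
  set D22 := (M.submatrix i₂.succAbove j₂.succAbove).det with hD22
  set D12 := (M.submatrix i₁.succAbove j₂.succAbove).det with hD12
  set D21 := (M.submatrix i₂.succAbove j₁.succAbove).det with hD21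
  set small := (M.submatrix
        (fun k : Fin n => i₂.succAbove
          ((⟨i₁.val, Nat.lt_of_lt_of_le hi (Nat.le_of_lt_succ i₂.isLt)⟩ : Fin (n + 1)).succAbove k))
        (fun k : Fin n => j₂.succAbove
          ((⟨j₁.val, Nat.lt_of_lt_of_le hj (Nat.le_of_lt_succ j₂.isLt)⟩ : Fin (n + 1)).succAbove k))).det with hsmall
  set a : R := (-1) ^ (i₁.val + i₂.val + j₁.val + j₂.val) with ha
  have ha2 : a * a = 1 := by
    rw [ha, ← pow_add]
    exact Even.neg_one_pow ⟨i₁.val + i₂.val + j₁.val + j₂.val, rfl⟩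
  have hpq : ((-1 : R)) ^ (i₁.val + j₁.val) * (-1) ^ (i₂.val + j₂.val) = a := by
    rw [ha, ← pow_add]; congr 1; omega
  have hrt : ((-1 : R)) ^ (i₁.val + j₂.val) * (-1) ^ (i₂.val + j₁.val) = a := by
    rw [ha, ← pow_add]; congr 1; omega
  have hqp : ((-1 : R)) ^ (i₂.val + j₂.val) * (-1) ^ (i₁.val + j₁.val) = a := by
    rw [ha, ← pow_add]; congr 1; omega
  -- columns of M * adjugate M
  have hcol : ∀ (i₀ p : Fin (n + 2)), (∑ k, M p k * adjugate M k i₀)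
      = M.det * ((Pi.single i₀ (1 : R) : Fin (n + 2) → R) p) := by
    intro i₀ p
    have h := congrFun (congrFun (mul_adjugate M) p) i₀
    rw [Matrix.mul_apply] at h
    rw [h]
    simp [Matrix.smul_apply, Matrix.one_apply, Pi.single_apply, eq_comm]
  -- M * X explicitly
  have hMX : M * (((1 : Matrix (Fin (n + 2)) (Fin (n + 2)) R).updateCol j₁
        (fun k => adjugate M k i₁)).updateCol j₂ (fun k => adjugate M k i₂))
      = (M.updateCol j₁ (M.det • (Pi.single i₁ 1 : Fin (n + 2) → R))).updateCol j₂
        (M.det • (Pi.single i₂ 1 : Fin (n + 2) → R)) := by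
    ext p q
    rw [Matrix.mul_apply]
    simp only [Matrix.updateCol_apply]
    by_cases h2 : q = j₂
    · simp only [h2, eq_self_iff_true, if_true]
      rw [hcol i₂ p]
      simp
    by_cases h1 : q = j₁
    · simp only [h2, h1, if_neg hjne, eq_self_iff_true, if_true, if_false]
      rw [hcol i₁ p]
      simp
    · simp only [h2, h1, if_false]
      simp [Matrix.one_apply, mul_ite, Finset.sum_ite_eq']
  -- pull out the two scalar factors
  have hdetR : ((M.updateCol j₁ (M.det • (Pi.single i₁ 1 : Fin (n + 2) → R))).updateCol j₂
        (M.det • (Pi.single i₂ 1 : Fin (n + 2) → R))).det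
      = M.det * (M.det *
        (((M.updateCol j₁ (Pi.single i₁ 1)).updateCol j₂ (Pi.single i₂ 1)).det)) := by
    rw [det_updateCol_smul]
    rw [updateColumn_comm' _ hjne, det_updateCol_smul, updateColumn_comm' _ hjne]
  -- compute the double minor
  have hj1lt : j₁.val < n + 1 := by have := j₂.isLt; omega
  have hi1lt : i₁.val < n + 1 := by have := i₂.isLt; omega
  have hj' : j₂.succAbove ⟨j₁.val, hj1lt⟩ = j₁ := by
    rw [Fin.succAbove_of_castSucc_lt]
    · exact Fin.ext rfl
    · rw [Fin.lt_def]; exact hj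
  have hi' : i₂.succAbove ⟨i₁.val, hi1lt⟩ = i₁ := by
    rw [Fin.succAbove_of_castSucc_lt]
    · exact Fin.ext rfl
    · rw [Fin.lt_def]; exact hi
  have hZ : ((M.updateCol j₁ (Pi.single i₁ 1)).updateCol j₂
        ((Pi.single i₂ 1 : Fin (n + 2) → R))).det = a * small := by
    rw [det_updateColumn_single]
    rw [submatrix_updateColumn' M (Pi.single i₁ 1) i₂.succAbove j₂.succAbove
      Fin.succAbove_right_injective j₁ ⟨j₁.val, hj1lt⟩ hj']
    have hvec : (fun k => (Pi.single i₁ (1 : R) : Fin (n + 2) → R) (i₂.succAbove k))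
        = (Pi.single (⟨i₁.val, hi1lt⟩ : Fin (n + 1)) 1 : Fin (n + 1) → R) := by
      funext k
      rw [Pi.single_apply, Pi.single_apply]
      have heq : i₂.succAbove k = i₁ ↔ k = ⟨i₁.val, hi1lt⟩ :=
        ⟨fun h => Fin.succAbove_right_injective (h.trans hi'.symm),
         fun h => by rw [h, hi']⟩
      simp only [heq]
    rw [hvec, det_updateColumn_single, Matrix.submatrix_submatrix]
    have hc : ((M.submatrix (i₂.succAbove ∘ (⟨i₁.val, hi1lt⟩ : Fin (n + 1)).succAbove)
        (j₂.succAbove ∘ (⟨j₁.val, hj1lt⟩ : Fin (n + 1)).succAbove)).det) = small := by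
      rw [hsmall]; rfl
    rw [hc]
    have hv2 : ((⟨i₁.val, hi1lt⟩ : Fin (n + 1)).val + (⟨j₁.val, hj1lt⟩ : Fin (n + 1)).val)
        = i₁.val + j₁.val := rfl
    rw [hv2]
    linear_combination small * hqp
  -- determinant of X
  have hXval : (((1 : Matrix (Fin (n + 2)) (Fin (n + 2)) R).updateCol j₁
        (fun k => adjugate M k i₁)).updateCol j₂ (fun k => adjugate M k i₂)).det
      = a * (D11 * D22 - D12 * D21) := by
    rw [det_one_updateColumn_pair hjne]
    rw [adjugate_fin_succ_eq_det_submatrix, adjugate_fin_succ_eq_det_submatrix,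
      adjugate_fin_succ_eq_det_submatrix, adjugate_fin_succ_eq_det_submatrix]
    rw [← hD11, ← hD22, ← hD12, ← hD21]
    linear_combination (D11 * D22) * hpq - (D12 * D21) * hrt
  -- assemble
  have E : M.det * (a * (D11 * D22 - D12 * D21)) = M.det * (M.det * (a * small)) := by
    rw [← hXval, ← Matrix.det_mul, hMX, hdetR, hZ]
  linear_combination (M.det * (D11 * D22 - D12 * D21) - M.det * (M.det * small)) * ha2 - a * E


end JacobiAux

/-- Jacobi's determinant identity: for an `n×n` matrix `M` (`n ≥ 2`), with rows
`i₁ < i₂` and columns `j₁ < j₂`,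
`D · D[i₁,i₂;j₁,j₂] = D[i₁;j₁]·D[i₂;j₂] − D[i₁;j₂]·D[i₂;j₁]`,
where minors are obtained by deleting the listed rows and columns. -/
theorem jacobi_determinant_identity {R : Type*} [CommRing R] {n : ℕ}
    (M : Matrix (Fin (n + 2)) (Fin (n + 2)) R)
    (i₁ i₂ j₁ j₂ : Fin (n + 2)) (hi : i₁.val < i₂.val) (hj : j₁.val < j₂.val) :
    M.det *
      (M.submatrix
        (fun k : Fin n => i₂.succAbove
          ((⟨i₁.val, by have := i₂.isLt; omega⟩ : Fin (n + 1)).succAbove k))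
        (fun k : Fin n => j₂.succAbove
          ((⟨j₁.val, by have := j₂.isLt; omega⟩ : Fin (n + 1)).succAbove k))).det =
      (M.submatrix i₁.succAbove j₁.succAbove).det *
        (M.submatrix i₂.succAbove j₂.succAbove).det -
      (M.submatrix i₁.succAbove j₂.succAbove).det *
        (M.submatrix i₂.succAbove j₁.succAbove).det := by
  let A := mvPolynomialX (Fin (n + 2)) (Fin (n + 2)) ℤ
  let φ : MvPolynomial (Fin (n + 2) × Fin (n + 2)) ℤ →ₐ[ℤ] R :=
    MvPolynomial.aeval (fun p : Fin (n + 2) × Fin (n + 2) => M p.1 p.2)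
  have hdet : A.det ≠ 0 := det_mvPolynomialX_ne_zero _ ℤ
  have cancel := mul_left_cancel₀ hdet (JacobiAux.jacobi_key A i₁ i₂ j₁ j₂ hi hj)
  have hmap : φ.mapMatrix A = M := mvPolynomialX_mapMatrix_aeval ℤ M
  have hfinal := congrArg φ cancel
  rw [_root_.map_mul, map_sub, _root_.map_mul, _root_.map_mul] at hfinal
  simp only [AlgHom.map_det, AlgHom.mapMatrix_apply, ← Matrix.submatrix_map] at hfinal
  rw [show A.map φ = M from hmap] at hfinal
  exact hfinal
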